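/- Let μ₀ and μ₁ be probability measures on ℝ (the laws of a test statistic T under the null and the alternative), and suppose μ₁ is stochastically larger than μ₀, i.e. μ₁((t,∞)) ≥ μ₀((t,∞)) for all t. Define the p-value map p(t) = μ₀([t,∞)) and the mid-p map q(t) = (1/2)·μ₀([t,∞)) + (1/2)·μ₀((t,∞)), and let P = p(T), Q = q(T). If there exist x ∈ [0,1] and ε > 0 with P₁(P ≤ x) ≥ x + ε (probabilities under T ~ μ₁), then E₀[Q] − E₁[Q] ≥ ε²/2, where E₀ and E₁ denote expectations under T ~ μ₀ and T ~ μ₁ respectively. -/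

import Mathlib

open MeasureTheory Set Filter
open scoped ENNReal

namespace MidPAux

lemma anti_Ici (ν : Measure ℝ) : Antitone fun t => ν (Ici t) :=
  fun _ _ hab => measure_mono (Ici_subset_Ici.mpr hab)

lemma anti_Ioi (ν : Measure ℝ) : Antitone fun t => ν (Ioi t) :=
  fun _ _ hab => measure_mono (Ioi_subset_Ioi hab)

lemma meas_Ici (ν : Measure ℝ) : Measurable fun t => ν (Ici t) :=
  (anti_Ici ν).measurable

lemma meas_Ioi (ν : Measure ℝ) : Measurable fun t => ν (Ioi t) :=
  (anti_Ioi ν).measurable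

lemma iInter_Ioi (b : ℝ) : (⋂ n : ℕ, Ioi (b - 1/(n+1))) = Ici b := by
  ext u
  simp only [mem_iInter, mem_Ioi, mem_Ici]
  constructor
  · intro h
    by_contra hub
    push_neg at hub
    obtain ⟨n, hn⟩ := exists_nat_one_div_lt (show (0:ℝ) < b - u by linarith)
    have := h n
    have : (1:ℝ)/(n+1) < b - u := by exact_mod_cast hn
    linarith [h n]
  · intro h n
    have : (0:ℝ) < 1/(n+1) := by positivity
    linarith

lemma iUnion_Ici (b : ℝ) : (⋃ n : ℕ, Ici (b + 1/(n+1))) = Ioi b := by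
  ext u
  simp only [mem_iUnion, mem_Ici, mem_Ioi]
  constructor
  · rintro ⟨n, hn⟩
    have : (0:ℝ) < 1/(n+1) := by positivity
    linarith
  · intro h
    obtain ⟨n, hn⟩ := exists_nat_one_div_lt (show (0:ℝ) < u - b by linarith)
    have : (1:ℝ)/(n+1) < u - b := by exact_mod_cast hn
    exact ⟨n, by linarith⟩

lemma tendsto_Ioi_seq (ν : Measure ℝ) [IsFiniteMeasure ν] (b : ℝ) :
    Tendsto (fun n : ℕ => ν (Ioi (b - 1/(n+1)))) atTop (nhds (ν (Ici b))) := by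
  have h := MeasureTheory.tendsto_measure_iInter_atTop (μ := ν)
    (s := fun n : ℕ => Ioi (b - 1/(n+1)))
    (fun n => measurableSet_Ioi.nullMeasurableSet)
    (fun n m hnm => by
      apply Ioi_subset_Ioi
      have : (1:ℝ)/(m+1) ≤ 1/(n+1) := by
        apply one_div_le_one_div_of_le (by positivity)
        exact_mod_cast Nat.succ_le_succ hnm
      linarith)
    ⟨0, measure_ne_top _ _⟩
  rwa [iInter_Ioi b] at h

lemma tendsto_Ici_seq (ν : Measure ℝ) (b : ℝ) :
    Tendsto (fun n : ℕ => ν (Ici (b + 1/(n+1)))) atTop (nhds (ν (Ioi b))) := by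
  have h := MeasureTheory.tendsto_measure_iUnion_atTop (μ := ν)
    (s := fun n : ℕ => Ici (b + 1/(n+1)))
    (fun n m hnm => by
      apply Ici_subset_Ici.mpr
      have : (1:ℝ)/(m+1) ≤ 1/(n+1) := by
        apply one_div_le_one_div_of_le (by positivity)
        exact_mod_cast Nat.succ_le_succ hnm
      linarith)
  rwa [iUnion_Ici b] at h

/-- Super-uniformity: the null measure of the set where the "p-value ray measure"
is at most `lam` is itself at most `lam`. -/
lemma superuniform (ν : Measure ℝ) [IsFiniteMeasure ν] (lam : ℝ≥0∞) :
    ν {t | ν (Ici t) ≤ lam} ≤ lam := by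
  set U := {t | ν (Ici t) ≤ lam} with hU
  have hUup : ∀ t ∈ U, ∀ u, t ≤ u → u ∈ U := by
    intro t ht u htu
    exact le_trans (anti_Ici ν htu) ht
  rcases eq_empty_or_nonempty U with hUe | hUne
  · rw [hUe]; simpa using zero_le lam
  by_cases hbdd : BddBelow U
  · set b := sInf U with hb
    by_cases hbU : b ∈ U
    · have hsub : U ⊆ Ici b := fun u hu => csInf_le hbdd hu
      exact le_trans (measure_mono hsub) hbU
    · have hsub : U ⊆ Ioi b := by
        intro u hu
        rcases lt_or_eq_of_le (csInf_le hbdd hu) with h | h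
        · exact h
        · exact absurd (show b ∈ U by rw [hb, h]; exact hu) hbU
      refine le_trans (measure_mono hsub) ?_
      refine le_of_tendsto (tendsto_Ici_seq ν b) (Eventually.of_forall fun n => ?_)
      have hpos : (0:ℝ) < 1/(n+1) := by positivity
      obtain ⟨u, huU, hulec⟩ := (csInf_lt_iff hbdd hUne).mp
        (show sInf U < b + 1/(n+1) by rw [← hb]; linarith)
      exact le_trans (measure_mono (Ici_subset_Ici.mpr hulec.le)) huU
  · -- U is not bounded below, so U = univ
    have hUuniv : U = univ := by
      ext t
      simp only [mem_univ, iff_true]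
      obtain ⟨u, huU, hut⟩ : ∃ u ∈ U, u < t := by
        by_contra h
        push_neg at h
        exact hbdd ⟨t, fun v hv => h v hv⟩
      exact hUup u huU t hut.le
    rw [hUuniv]
    have : Tendsto (fun n : ℕ => ν (Ici (-(n:ℝ)))) atTop (nhds (ν univ)) := by
      have h := MeasureTheory.tendsto_measure_iUnion_atTop (μ := ν)
        (s := fun n : ℕ => Ici (-(n:ℝ)))
        (fun n m hnm => Ici_subset_Ici.mpr (by exact_mod_cast neg_le_neg (by exact_mod_cast hnm)))
      rwa [show (⋃ n : ℕ, Ici (-(n:ℝ))) = univ from ?_] at h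
      ext u
      simp only [mem_iUnion, mem_Ici, mem_univ, iff_true]
      obtain ⟨n, hn⟩ := exists_nat_gt (-u)
      exact ⟨n, by linarith⟩
    refine le_of_tendsto this (Eventually.of_forall fun n => ?_)
    have : (-(n:ℝ)) ∈ U := hUuniv ▸ mem_univ _
    exact this

/-- "Claim A": the set where the strict survival function is `< lam` has measure
at least `min lam (total mass)`. -/
lemma claimA (ν : Measure ℝ) [IsFiniteMeasure ν] (lam : ℝ≥0∞) (hlam : lam ≤ ν univ) :
    lam ≤ ν {t | ν (Ioi t) < lam} := by
  set S := {t | ν (Ioi t) < lam} with hS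
  have hSup : ∀ t ∈ S, ∀ u, t ≤ u → u ∈ S := by
    intro t ht u htu
    exact lt_of_le_of_lt (anti_Ioi ν htu) ht
  rcases eq_empty_or_nonempty S with hSe | hSne
  · -- S empty: then lam ≤ ν (Ioi t) for all t; but ν (Ioi n) → 0
    have hall : ∀ t : ℝ, lam ≤ ν (Ioi t) := by
      intro t
      by_contra h
      push_neg at h
      exact absurd (hSe ▸ h : t ∈ (∅ : Set ℝ)) (notMem_empty t)
    have htend : Tendsto (fun n : ℕ => ν (Ioi (n:ℝ))) atTop (nhds 0) := by
      have h := MeasureTheory.tendsto_measure_iInter_atTop (μ := ν)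
        (s := fun n : ℕ => Ioi (n:ℝ))
        (fun n => measurableSet_Ioi.nullMeasurableSet)
        (fun n m hnm => Ioi_subset_Ioi (by exact_mod_cast hnm))
        ⟨0, measure_ne_top _ _⟩
      have : (⋂ n : ℕ, Ioi (n:ℝ)) = ∅ := by
        ext u
        simp only [mem_iInter, mem_Ioi, mem_empty_iff_false, iff_false, not_forall, not_lt]
        obtain ⟨n, hn⟩ := exists_nat_gt u
        exact ⟨n, hn.le⟩
      rw [this] at h
      simpa [Function.comp_def] using h
    have : lam ≤ 0 := ge_of_tendsto htend (Eventually.of_forall fun n => hall n)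
    exact le_trans this zero_le
  by_cases hbdd : BddBelow S
  · set b := sInf S with hb
    by_cases hbS : b ∈ S
    · have hsub : Ici b ⊆ S := fun u hu => hSup b hbS u hu
      refine le_trans ?_ (measure_mono hsub)
      refine ge_of_tendsto (tendsto_Ioi_seq ν b) (Eventually.of_forall fun n => ?_)
      have hpos : (0:ℝ) < 1/(n+1) := by positivity
      have hnot : (b - 1/(n+1)) ∉ S := by
        intro h
        have := csInf_le hbdd h
        rw [← hb] at this
        linarith
      exact not_lt.mp hnot
    · have hsub : Ioi b ⊆ S := by
        intro u hu
        obtain ⟨s, hsS, hsu⟩ := (csInf_lt_iff hbdd hSne).mp (hb ▸ hu : sInf S < u)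
        exact hSup s hsS u hsu.le
      have hbnot : ¬ ν (Ioi b) < lam := hbS
      exact le_trans (not_lt.mp hbnot) (measure_mono hsub)
  · have hSuniv : S = univ := by
      ext t
      simp only [mem_univ, iff_true]
      obtain ⟨u, huS, hut⟩ : ∃ u ∈ S, u < t := by
        by_contra h
        push_neg at h
        exact hbdd ⟨t, fun v hv => h v hv⟩
      exact hSup u huS t hut.le
    rw [hSuniv]; exact hlam

lemma sq_div2_mono {e g : ℝ} (he : 0 ≤ e) (h : e ≤ g) : e ^ 2 / 2 ≤ g ^ 2 / 2 := by nlinarith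

lemma sq_le_calc {z a m J : ℝ} (h0 : a ≤ z) (hm : z - a ≤ m) (hJ : m * (z - a) ≤ J) :
    (z - a) ^ 2 ≤ J := by nlinarith

lemma final_algebra1 (a z J : ℝ) (h1 : z = a) (hJ : 0 ≤ J) :
    a ^ 2 / 2 ≤ a * z - z * z / 2 + J / 2 := by nlinarith

lemma final_algebra2 (a z J : ℝ) (hJ : (z - a) ^ 2 ≤ J) :
    a ^ 2 / 2 ≤ a * z - z * z / 2 + J / 2 := by nlinarith

end MidPAux


namespace MidPAux2

open MidPAux

lemma meas_Iic (ν : Measure ℝ) : Measurable fun t => ν (Iic t) := by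
  have h : Monotone fun t => ν (Iic t) := fun _ _ hab => measure_mono (Iic_subset_Iic.mpr hab)
  exact h.measurable

lemma meas_Iio (ν : Measure ℝ) : Measurable fun t => ν (Iio t) := by
  have h : Monotone fun t => ν (Iio t) := fun _ _ hab => measure_mono (Iio_subset_Iio hab)
  exact h.measurable

lemma swap_ray (μ ν : Measure ℝ) [IsFiniteMeasure μ] [IsFiniteMeasure ν] :
    ∫⁻ t, μ (Ici t) ∂ν = ∫⁻ u, ν (Iic u) ∂μ := by
  have hs : MeasurableSet {p : ℝ × ℝ | p.1 ≤ p.2} :=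
    measurableSet_le measurable_fst measurable_snd
  have hm : Measurable (Function.uncurry fun t u =>
      ({p : ℝ × ℝ | p.1 ≤ p.2}.indicator (fun _ => (1:ℝ≥0∞)) (t, u))) := by
    have heq : (Function.uncurry fun t u =>
        ({p : ℝ × ℝ | p.1 ≤ p.2}.indicator (fun _ => (1:ℝ≥0∞)) (t, u)))
        = {p : ℝ × ℝ | p.1 ≤ p.2}.indicator (fun _ => (1:ℝ≥0∞)) := by
      funext p; cases p; rfl
    rw [heq]; exact measurable_const.indicator hs
  calc ∫⁻ t, μ (Ici t) ∂ν
      = ∫⁻ t, ∫⁻ u, ({p : ℝ × ℝ | p.1 ≤ p.2}.indicator (fun _ => (1:ℝ≥0∞)) (t, u)) ∂μ ∂ν := by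
        refine lintegral_congr fun t => ?_
        rw [← lintegral_indicator_one measurableSet_Ici]
        refine lintegral_congr fun u => ?_
        by_cases h : t ≤ u <;> simp [Set.indicator, h, mem_Ici, mem_setOf_eq]
    _ = ∫⁻ u, ∫⁻ t, ({p : ℝ × ℝ | p.1 ≤ p.2}.indicator (fun _ => (1:ℝ≥0∞)) (t, u)) ∂ν ∂μ :=
        lintegral_lintegral_swap hm.aemeasurable
    _ = ∫⁻ u, ν (Iic u) ∂μ := by
        refine lintegral_congr fun u => ?_
        rw [← lintegral_indicator_one measurableSet_Iic]
        refine lintegral_congr fun t => ?_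
        by_cases h : t ≤ u <;> simp [Set.indicator, h, mem_Iic, mem_setOf_eq]

lemma swap_ray_lt (μ ν : Measure ℝ) [IsFiniteMeasure μ] [IsFiniteMeasure ν] :
    ∫⁻ t, μ (Ioi t) ∂ν = ∫⁻ u, ν (Iio u) ∂μ := by
  have hs : MeasurableSet {p : ℝ × ℝ | p.1 < p.2} :=
    measurableSet_lt measurable_fst measurable_snd
  have hm : Measurable (Function.uncurry fun t u =>
      ({p : ℝ × ℝ | p.1 < p.2}.indicator (fun _ => (1:ℝ≥0∞)) (t, u))) := by
    have heq : (Function.uncurry fun t u =>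
        ({p : ℝ × ℝ | p.1 < p.2}.indicator (fun _ => (1:ℝ≥0∞)) (t, u)))
        = {p : ℝ × ℝ | p.1 < p.2}.indicator (fun _ => (1:ℝ≥0∞)) := by
      funext p; cases p; rfl
    rw [heq]; exact measurable_const.indicator hs
  calc ∫⁻ t, μ (Ioi t) ∂ν
      = ∫⁻ t, ∫⁻ u, ({p : ℝ × ℝ | p.1 < p.2}.indicator (fun _ => (1:ℝ≥0∞)) (t, u)) ∂μ ∂ν := by
        refine lintegral_congr fun t => ?_
        rw [← lintegral_indicator_one measurableSet_Ioi]
        refine lintegral_congr fun u => ?_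
        by_cases h : t < u <;> simp [Set.indicator, h, mem_Ioi, mem_setOf_eq]
    _ = ∫⁻ u, ∫⁻ t, ({p : ℝ × ℝ | p.1 < p.2}.indicator (fun _ => (1:ℝ≥0∞)) (t, u)) ∂ν ∂μ :=
        lintegral_lintegral_swap hm.aemeasurable
    _ = ∫⁻ u, ν (Iio u) ∂μ := by
        refine lintegral_congr fun u => ?_
        rw [← lintegral_indicator_one measurableSet_Iio]
        refine lintegral_congr fun t => ?_
        by_cases h : t < u <;> simp [Set.indicator, h, mem_Iio, mem_setOf_eq]

/-- Symmetry identity: `∫ (ν[t,∞) + ν(t,∞)) dν(t) = ν(ℝ)²`. -/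
lemma sym_id (ν : Measure ℝ) [IsFiniteMeasure ν] :
    ∫⁻ t, (ν (Ici t) + ν (Ioi t)) ∂ν = ν univ * ν univ := by
  rw [lintegral_add_left (meas_Ici ν), swap_ray ν ν, ← lintegral_add_left (meas_Iic ν)]
  have hpt : ∀ u : ℝ, ν (Iic u) + ν (Ioi u) = ν univ := by
    intro u
    rw [← compl_Iic]
    exact measure_add_measure_compl measurableSet_Iic
  calc ∫⁻ u, (ν (Iic u) + ν (Ioi u)) ∂ν = ∫⁻ _, ν univ ∂ν := lintegral_congr hpt
    _ = ν univ * ν univ := by rw [lintegral_const, mul_comm]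

end MidPAux2


open MidPAux MidPAux2

/-- Let `μ₀` and `μ₁` be probability measures on `ℝ` (the laws of a test statistic `T`
under the null and alternative hypotheses), with `μ₁` stochastically larger than `μ₀`.
Let `p(t) = μ₀[t,∞)` be the p-value map and
`q(t) = (1/2) μ₀[t,∞) + (1/2) μ₀(t,∞)` the mid-p-value map.  If there exist
`x ∈ [0,1]` and `ε > 0` with `P₁(p(T) ≤ x) ≥ x + ε`, then
`E₀[q(T)] − E₁[q(T)] ≥ ε²/2`. -/
theorem midP_mean_gap (μ₀ μ₁ : Measure ℝ) [IsProbabilityMeasure μ₀]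
    [IsProbabilityMeasure μ₁]
    (hst : ∀ t : ℝ, μ₀ (Set.Ioi t) ≤ μ₁ (Set.Ioi t))
    (p q : ℝ → ℝ)
    (hp : ∀ t, p t = (μ₀ (Set.Ici t)).toReal)
    (hq : ∀ t, q t = (1/2) * (μ₀ (Set.Ici t)).toReal + (1/2) * (μ₀ (Set.Ioi t)).toReal)
    (x : ℝ) (hx : x ∈ Set.Icc (0:ℝ) 1) (ε : ℝ) (hε : 0 < ε)
    (hdetect : ENNReal.ofReal (x + ε) ≤ μ₁ {t | p t ≤ x}) :
    ε ^ 2 / 2 ≤ ∫ t, q t ∂μ₀ - ∫ t, q t ∂μ₁ := by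
  have hp' : p = fun t => (μ₀ (Set.Ici t)).toReal := funext hp
  have hq' : q = fun t =>
      (1/2) * (μ₀ (Set.Ici t)).toReal + (1/2) * (μ₀ (Set.Ioi t)).toReal := funext hq
  subst hp' hq'
  -- basic notation
  set c : ℝ := x + ε with hc
  set R : Set ℝ := {t | (μ₀ (Set.Ici t)).toReal ≤ x} with hRdef
  have hdet : ENNReal.ofReal c ≤ μ₁ R := hdetect
  have hc0 : (0:ℝ) ≤ c := by linarith [hx.1, hε.le]
  have hc1 : c ≤ 1 := by
    have h1 : ENNReal.ofReal c ≤ 1 := le_trans hdet prob_le_one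
    exact_mod_cast ENNReal.ofReal_le_one.mp h1
  -- R facts
  have hRset : R = {t | μ₀ (Set.Ici t) ≤ ENNReal.ofReal x} := by
    ext t
    simp only [hRdef, mem_setOf_eq]
    exact (ENNReal.le_ofReal_iff_toReal_le (measure_ne_top _ _) hx.1).symm
  have hRupper : ∀ t ∈ R, ∀ u, t ≤ u → u ∈ R := by
    intro t ht u htu
    rw [hRset] at ht ⊢
    exact le_trans (measure_mono (Ici_subset_Ici.mpr htu)) ht
  have hRmeas : MeasurableSet R := by
    rw [hRset]
    exact (meas_Ici μ₀) measurableSet_Iic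
  have hRx : μ₀ R ≤ ENNReal.ofReal x := by
    rw [hRset]; exact superuniform μ₀ (ENNReal.ofReal x)
  set y : ℝ≥0∞ := μ₀ R with hydef
  set yr : ℝ := y.toReal with hyrdef
  have hyrx : yr ≤ x := by
    rw [hyrdef]
    exact ENNReal.toReal_le_of_le_ofReal hx.1 hRx
  have hyr0 : 0 ≤ yr := ENNReal.toReal_nonneg
  set γ : ℝ := c - yr with hγdef
  have hεγ : ε ≤ γ := by simp only [hγdef, hc]; linarith
  have hγpos : 0 < γ := lt_of_lt_of_le hε hεγ
  have hγ1 : γ ≤ 1 - yr := by simp only [hγdef]; linarith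
  -- the restricted measure μ' and the set Z
  set μ' : Measure ℝ := μ₀.restrict Rᶜ with hμ'def
  set S : Set ℝ := {t | μ' (Set.Ioi t) < ENNReal.ofReal γ} with hSdef
  have hSmeas : MeasurableSet S := (meas_Ioi μ') measurableSet_Iio
  have hRS : R ⊆ S := by
    intro t ht
    have hempty : Set.Ioi t ∩ Rᶜ = ∅ := by
      ext u
      simp only [mem_inter_iff, mem_Ioi, mem_compl_iff, mem_empty_iff_false, iff_false,
        not_and, not_not]
      intro htu
      exact hRupper t ht u htu.le
    have : μ' (Set.Ioi t) = 0 := by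
      rw [hμ'def, Measure.restrict_apply measurableSet_Ioi, hempty, measure_empty]
    rw [hSdef, mem_setOf_eq, this]
    exact ENNReal.ofReal_pos.mpr hγpos
  set Z : Set ℝ := S \ R with hZdef
  have hZmeas : MeasurableSet Z := hSmeas.diff hRmeas
  set ν : Measure ℝ := μ₀.restrict Z with hνdef
  have hνfin : IsFiniteMeasure ν := by
    constructor
    rw [hνdef, Measure.restrict_apply_univ]
    exact measure_lt_top μ₀ Z
  set ζ : ℝ≥0∞ := μ₀ Z with hζdef
  have hνuniv : ν Set.univ = ζ := by rw [hνdef, Measure.restrict_apply_univ, hζdef]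
  set ζr : ℝ := ζ.toReal with hζrdef
  have hζfin : ζ ≠ ⊤ := measure_ne_top _ _
  -- lower bound on ζ via claim A
  have hμ'univ : μ' Set.univ = 1 - y := by
    rw [hμ'def, Measure.restrict_apply_univ, measure_compl hRmeas (measure_ne_top _ _),
      measure_univ, hydef]
  have hγle : ENNReal.ofReal γ ≤ μ' Set.univ := by
    rw [hμ'univ]
    have h1 : y = ENNReal.ofReal yr := by
      rw [hyrdef, ENNReal.ofReal_toReal (measure_ne_top _ _)]
    rw [h1, ← ENNReal.ofReal_one, ← ENNReal.ofReal_sub _ hyr0]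
    exact ENNReal.ofReal_le_ofReal hγ1
  have hζγ : ENNReal.ofReal γ ≤ ζ := by
    have h1 := claimA μ' (ENNReal.ofReal γ) hγle
    have h2 : μ' S = ζ := by
      rw [hμ'def, Measure.restrict_apply hSmeas, hζdef, hZdef, diff_eq]
    rw [hζdef]
    calc ENNReal.ofReal γ ≤ μ' {t | μ' (Set.Ioi t) < ENNReal.ofReal γ} := h1
      _ = ζ := h2
      _ = μ₀ Z := hζdef.symm
  have hζrγ : γ ≤ ζr := by
    rw [hζrdef]
    have := ENNReal.toReal_mono hζfin hζγ
    rwa [ENNReal.toReal_ofReal hγpos.le] at this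
  -- structural inclusions
  have hZS : Z ⊆ S := diff_subset
  have hZRc : Z ⊆ Rᶜ := fun u hu => hu.2
  have hIciZ : ∀ u ∈ Z, Set.Ici u ∩ Rᶜ = Set.Ici u ∩ Z := by
    intro u hu
    apply Subset.antisymm
    · intro w hw
      refine ⟨hw.1, ?_, hw.2⟩
      rw [hSdef, mem_setOf_eq]
      exact lt_of_le_of_lt (measure_mono (Ioi_subset_Ioi hw.1)) (hZS hu)
    · exact fun w hw => ⟨hw.1, hw.2.2⟩
  have hIoiZ : ∀ u ∈ Z, Set.Ioi u ∩ Rᶜ = Set.Ioi u ∩ Z := by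
    intro u hu
    apply Subset.antisymm
    · intro w hw
      refine ⟨hw.1, ?_, hw.2⟩
      rw [hSdef, mem_setOf_eq]
      exact lt_of_le_of_lt (measure_mono (Ioi_subset_Ioi hw.1.le)) (hZS hu)
    · exact fun w hw => ⟨hw.1, hw.2.2⟩
  -- stochastic dominance for closed rays and left rays
  have hstci : ∀ t : ℝ, μ₀ (Set.Ici t) ≤ μ₁ (Set.Ici t) := by
    intro t
    refine le_of_tendsto_of_tendsto' (tendsto_Ioi_seq μ₀ t) (tendsto_Ioi_seq μ₁ t) ?_
    intro n
    exact hst _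
  have hdomIic : ∀ u : ℝ, μ₁ (Set.Iic u) ≤ μ₀ (Set.Iic u) := by
    intro u
    have h0 : ∀ (μ : Measure ℝ) [IsProbabilityMeasure μ], μ (Set.Iic u) = 1 - μ (Set.Ioi u) := by
      intro μ _
      rw [← compl_Ioi, measure_compl measurableSet_Ioi (measure_ne_top _ _), measure_univ]
    rw [h0 μ₀, h0 μ₁]
    exact tsub_le_tsub_left (hst u) 1
  have hdomIio : ∀ u : ℝ, μ₁ (Set.Iio u) ≤ μ₀ (Set.Iio u) := by
    intro u
    have h0 : ∀ (μ : Measure ℝ) [IsProbabilityMeasure μ], μ (Set.Iio u) = 1 - μ (Set.Ici u) := by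
      intro μ _
      rw [← compl_Ici, measure_compl measurableSet_Ici (measure_ne_top _ _), measure_univ]
    rw [h0 μ₀, h0 μ₁]
    exact tsub_le_tsub_left (hstci u) 1
  -- the integrand g
  set g : ℝ → ℝ := fun u =>
    (((μ₀ (Set.Iic u)).toReal - (μ₁ (Set.Iic u)).toReal)
      + ((μ₀ (Set.Iio u)).toReal - (μ₁ (Set.Iio u)).toReal)) / 2 with hgdef
  -- integrability helpers
  have hintega : ∀ (μ ρ : Measure ℝ) [IsFiniteMeasure μ] [IsFiniteMeasure ρ]
      (f : ℝ → ℝ≥0∞), Measurable f → (∀ t, f t ≤ 1) →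
      Integrable (fun t => (f t).toReal) ρ := by
    intro μ ρ _ _ f hf hb
    apply integrable_toReal_of_lintegral_ne_top hf.aemeasurable
    have : ∫⁻ t, f t ∂ρ ≤ ∫⁻ _, 1 ∂ρ := lintegral_mono hb
    rw [lintegral_one] at this
    exact ne_top_of_le_ne_top (measure_ne_top _ _) this
  have hIic0int : Integrable (fun u => (μ₀ (Set.Iic u)).toReal) μ₀ :=
    hintega μ₀ μ₀ _ (meas_Iic μ₀) (fun t => prob_le_one)
  have hIic1int : Integrable (fun u => (μ₁ (Set.Iic u)).toReal) μ₀ :=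
    hintega μ₀ μ₀ _ (meas_Iic μ₁) (fun t => prob_le_one)
  have hIio0int : Integrable (fun u => (μ₀ (Set.Iio u)).toReal) μ₀ :=
    hintega μ₀ μ₀ _ (meas_Iio μ₀) (fun t => prob_le_one)
  have hIio1int : Integrable (fun u => (μ₁ (Set.Iio u)).toReal) μ₀ :=
    hintega μ₀ μ₀ _ (meas_Iio μ₁) (fun t => prob_le_one)
  have hgint : Integrable g μ₀ := by
    apply Integrable.div_const
    exact ((hIic0int.sub hIic1int).add (hIio0int.sub hIio1int))
  -- the mean difference equals ∫ g dμ₀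
  have hqint : ∀ (μ : Measure ℝ), IsProbabilityMeasure μ →
      ∫ t, ((1:ℝ)/2 * (μ₀ (Set.Ici t)).toReal + 1/2 * (μ₀ (Set.Ioi t)).toReal) ∂μ
        = ((∫⁻ t, μ₀ (Set.Ici t) ∂μ).toReal + (∫⁻ t, μ₀ (Set.Ioi t) ∂μ).toReal) / 2 := by
    intro μ hμ
    have hi1 : Integrable (fun t => (μ₀ (Set.Ici t)).toReal) μ :=
      hintega μ₀ μ _ (meas_Ici μ₀) (fun t => prob_le_one)
    have hi2 : Integrable (fun t => (μ₀ (Set.Ioi t)).toReal) μ :=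
      hintega μ₀ μ _ (meas_Ioi μ₀) (fun t => prob_le_one)
    rw [integral_add (hi1.const_mul _) (hi2.const_mul _), integral_const_mul,
      integral_const_mul,
      integral_toReal (meas_Ici μ₀).aemeasurable (Eventually.of_forall fun t => measure_lt_top _ _),
      integral_toReal (meas_Ioi μ₀).aemeasurable (Eventually.of_forall fun t => measure_lt_top _ _)]
    ring
  have hD : ∫ t, ((1:ℝ)/2 * (μ₀ (Set.Ici t)).toReal + 1/2 * (μ₀ (Set.Ioi t)).toReal) ∂μ₀
      - ∫ t, ((1:ℝ)/2 * (μ₀ (Set.Ici t)).toReal + 1/2 * (μ₀ (Set.Ioi t)).toReal) ∂μ₁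
      = ∫ u, g u ∂μ₀ := by
    rw [hqint μ₀ inferInstance, hqint μ₁ inferInstance]
    rw [swap_ray μ₀ μ₀, swap_ray_lt μ₀ μ₀, swap_ray μ₀ μ₁, swap_ray_lt μ₀ μ₁]
    rw [← integral_toReal (meas_Iic μ₀).aemeasurable
        (Eventually.of_forall fun t => measure_lt_top _ _),
      ← integral_toReal (meas_Iio μ₀).aemeasurable
        (Eventually.of_forall fun t => measure_lt_top _ _),
      ← integral_toReal (meas_Iic μ₁).aemeasurable
        (Eventually.of_forall fun t => measure_lt_top _ _),
      ← integral_toReal (meas_Iio μ₁).aemeasurable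
        (Eventually.of_forall fun t => measure_lt_top _ _)]
    rw [hgdef]
    have hsub1 : Integrable (fun u => (μ₀ (Set.Iic u)).toReal - (μ₁ (Set.Iic u)).toReal) μ₀ :=
      hIic0int.sub hIic1int
    have hsub2 : Integrable (fun u => (μ₀ (Set.Iio u)).toReal - (μ₁ (Set.Iio u)).toReal) μ₀ :=
      hIio0int.sub hIio1int
    rw [integral_div, integral_add hsub1 hsub2,
      integral_sub hIic0int hIic1int, integral_sub hIio0int hIio1int]
    ring
  rw [hD]
  -- g is nonneg
  have hg0 : ∀ u, 0 ≤ g u := by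
    intro u
    have h1 : (μ₁ (Set.Iic u)).toReal ≤ (μ₀ (Set.Iic u)).toReal :=
      ENNReal.toReal_mono (measure_ne_top _ _) (hdomIic u)
    have h2 : (μ₁ (Set.Iio u)).toReal ≤ (μ₀ (Set.Iio u)).toReal :=
      ENNReal.toReal_mono (measure_ne_top _ _) (hdomIio u)
    rw [hgdef]
    simp only
    linarith
  -- the comparison function f on Z
  set f : ℝ → ℝ := fun u =>
    (max (γ - (ν (Set.Ici u)).toReal) 0 + (γ - (ν (Set.Ioi u)).toReal)) / 2 with hfdef
  -- pointwise bound g ≥ f on Z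
  have hgf : ∀ u ∈ Z, f u ≤ g u := by
    intro u hu
    have huR : u ∉ R := hu.2
    have hIicRc : Set.Iic u ⊆ Rᶜ := by
      intro w hw
      intro hwR
      exact huR (hRupper w hwR u hw)
    have hIioRc : Set.Iio u ⊆ Rᶜ := fun w hw => hIicRc (mem_Iic.mpr (le_of_lt (mem_Iio.mp hw)))
    -- bounds involving c for μ₁
    have hcbound : ∀ s : Set ℝ, s ⊆ Rᶜ → (μ₁ s).toReal ≤ 1 - c := by
      intro s hs
      have h1 : μ₁ s ≤ 1 - ENNReal.ofReal c := by
        calc μ₁ s ≤ μ₁ Rᶜ := measure_mono hs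
          _ = 1 - μ₁ R := by
              rw [measure_compl hRmeas (measure_ne_top _ _), measure_univ]
          _ ≤ 1 - ENNReal.ofReal c := tsub_le_tsub_left hdet 1
      have h2 : ((1:ℝ≥0∞) - ENNReal.ofReal c).toReal = 1 - c := by
        rw [ENNReal.toReal_sub_of_le (ENNReal.ofReal_le_one.mpr hc1) ENNReal.one_ne_top]
        rw [ENNReal.toReal_ofReal hc0, ENNReal.toReal_one]
      calc (μ₁ s).toReal ≤ ((1:ℝ≥0∞) - ENNReal.ofReal c).toReal :=
            ENNReal.toReal_mono (by simp [ENNReal.sub_ne_top]) h1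
        _ = 1 - c := h2
    -- bounds for μ₀ rays through y and ν
    have h0Ioi : (μ₀ (Set.Ioi u)).toReal ≤ yr + (ν (Set.Ioi u)).toReal := by
      have hsplit : μ₀ (Set.Ioi u) ≤ y + ν (Set.Ioi u) := by
        have hcover : Set.Ioi u = (Set.Ioi u ∩ R) ∪ (Set.Ioi u ∩ Rᶜ) := by
          rw [inter_union_compl]
        calc μ₀ (Set.Ioi u) = μ₀ ((Set.Ioi u ∩ R) ∪ (Set.Ioi u ∩ Rᶜ)) := by rw [← hcover]
          _ ≤ μ₀ (Set.Ioi u ∩ R) + μ₀ (Set.Ioi u ∩ Rᶜ) := measure_union_le _ _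
          _ ≤ y + ν (Set.Ioi u) := by
              apply add_le_add
              · exact measure_mono inter_subset_right
              · rw [hIoiZ u hu, hνdef, Measure.restrict_apply measurableSet_Ioi]
      calc (μ₀ (Set.Ioi u)).toReal ≤ (y + ν (Set.Ioi u)).toReal :=
            ENNReal.toReal_mono (by
              exact ENNReal.add_ne_top.mpr ⟨measure_ne_top _ _, measure_ne_top _ _⟩) hsplit
        _ = yr + (ν (Set.Ioi u)).toReal := by
            rw [ENNReal.toReal_add (measure_ne_top _ _) (measure_ne_top _ _)]
    have h0Ici : (μ₀ (Set.Ici u)).toReal ≤ yr + (ν (Set.Ici u)).toReal := by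
      have hsplit : μ₀ (Set.Ici u) ≤ y + ν (Set.Ici u) := by
        have hcover : Set.Ici u = (Set.Ici u ∩ R) ∪ (Set.Ici u ∩ Rᶜ) := by
          rw [inter_union_compl]
        calc μ₀ (Set.Ici u) = μ₀ ((Set.Ici u ∩ R) ∪ (Set.Ici u ∩ Rᶜ)) := by rw [← hcover]
          _ ≤ μ₀ (Set.Ici u ∩ R) + μ₀ (Set.Ici u ∩ Rᶜ) := measure_union_le _ _
          _ ≤ y + ν (Set.Ici u) := by
              apply add_le_add
              · exact measure_mono inter_subset_right
              · rw [hIciZ u hu, hνdef, Measure.restrict_apply measurableSet_Ici]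
      calc (μ₀ (Set.Ici u)).toReal ≤ (y + ν (Set.Ici u)).toReal :=
            ENNReal.toReal_mono (by
              exact ENNReal.add_ne_top.mpr ⟨measure_ne_top _ _, measure_ne_top _ _⟩) hsplit
        _ = yr + (ν (Set.Ici u)).toReal := by
            rw [ENNReal.toReal_add (measure_ne_top _ _) (measure_ne_top _ _)]
    have hcompl0 : ∀ (μ : Measure ℝ) [IsProbabilityMeasure μ],
        (μ (Set.Iic u)).toReal = 1 - (μ (Set.Ioi u)).toReal := by
      intro μ _
      have : μ (Set.Iic u) + μ (Set.Ioi u) = 1 := by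
        rw [← compl_Iic]
        rw [measure_add_measure_compl measurableSet_Iic, measure_univ]
      have h2 := congrArg ENNReal.toReal this
      rw [ENNReal.toReal_add (measure_ne_top _ _) (measure_ne_top _ _), ENNReal.toReal_one] at h2
      linarith
    have hcompl0' : ∀ (μ : Measure ℝ) [IsProbabilityMeasure μ],
        (μ (Set.Iio u)).toReal = 1 - (μ (Set.Ici u)).toReal := by
      intro μ _
      have : μ (Set.Iio u) + μ (Set.Ici u) = 1 := by
        rw [← compl_Iio]
        rw [measure_add_measure_compl measurableSet_Iio, measure_univ]
      have h2 := congrArg ENNReal.toReal this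
      rw [ENNReal.toReal_add (measure_ne_top _ _) (measure_ne_top _ _), ENNReal.toReal_one] at h2
      linarith
    -- part 1: closed rays
    have hpart1 : γ - (ν (Set.Ioi u)).toReal
        ≤ (μ₀ (Set.Iic u)).toReal - (μ₁ (Set.Iic u)).toReal := by
      have h1 := hcbound (Set.Iic u) hIicRc
      have h2 := hcompl0 μ₀
      have := h0Ioi
      simp only [hγdef] at *
      linarith
    -- part 2: open left rays
    have hpart2 : max (γ - (ν (Set.Ici u)).toReal) 0
        ≤ (μ₀ (Set.Iio u)).toReal - (μ₁ (Set.Iio u)).toReal := by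
      apply max_le
      · have h1 := hcbound (Set.Iio u) hIioRc
        have h2 := hcompl0' μ₀
        have := h0Ici
        simp only [hγdef] at *
        linarith
      · have h2 : (μ₁ (Set.Iio u)).toReal ≤ (μ₀ (Set.Iio u)).toReal :=
          ENNReal.toReal_mono (measure_ne_top _ _) (hdomIio u)
        linarith
    rw [hfdef, hgdef]
    simp only
    linarith
  -- reduce to the integral of f over Z
  have hstep1 : ∫ u in Z, g u ∂μ₀ ≤ ∫ u, g u ∂μ₀ :=
    setIntegral_le_integral hgint (Eventually.of_forall hg0)
  -- integrability over ν
  have hνIciint : Integrable (fun u => (ν (Set.Ici u)).toReal) ν := by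
    apply integrable_toReal_of_lintegral_ne_top (meas_Ici ν).aemeasurable
    have : ∫⁻ t, ν (Set.Ici t) ∂ν ≤ ∫⁻ _, ζ ∂ν := by
      apply lintegral_mono
      intro t
      rw [← hνuniv]
      exact measure_mono (subset_univ _)
    rw [lintegral_const, hνuniv] at this
    exact ne_top_of_le_ne_top (ENNReal.mul_ne_top hζfin hζfin) this
  have hνIoiint : Integrable (fun u => (ν (Set.Ioi u)).toReal) ν := by
    apply integrable_toReal_of_lintegral_ne_top (meas_Ioi ν).aemeasurable
    have : ∫⁻ t, ν (Set.Ioi t) ∂ν ≤ ∫⁻ _, ζ ∂ν := by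
      apply lintegral_mono
      intro t
      rw [← hνuniv]
      exact measure_mono (subset_univ _)
    rw [lintegral_const, hνuniv] at this
    exact ne_top_of_le_ne_top (ENNReal.mul_ne_top hζfin hζfin) this
  have hmaxint : Integrable (fun u => max ((ν (Set.Ici u)).toReal - γ) 0) ν :=
    (hνIciint.sub (integrable_const γ)).pos_part
  have hfint : Integrable f ν := by
    rw [hfdef]
    apply Integrable.div_const
    apply Integrable.add
    · exact ((integrable_const γ).sub hνIciint).pos_part
    · exact (integrable_const γ).sub hνIoiint
  have hgZint : IntegrableOn g Z μ₀ := hgint.integrableOn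
  have hstep2 : ∫ u in Z, f u ∂μ₀ ≤ ∫ u in Z, g u ∂μ₀ := by
    apply setIntegral_mono_on hfint hgZint hZmeas
    exact hgf
  -- the symmetry identity for ν
  have hsymν : ∫ u, ((ν (Set.Ici u)).toReal + (ν (Set.Ioi u)).toReal) ∂ν = ζr * ζr := by
    have h1 : ∫ u, ((ν (Set.Ici u)).toReal + (ν (Set.Ioi u)).toReal) ∂ν
        = (∫⁻ u, (ν (Set.Ici u) + ν (Set.Ioi u)) ∂ν).toReal := by
      rw [← integral_toReal (f := fun t => ν (Set.Ici t) + ν (Set.Ioi t)) ((meas_Ici ν).add (meas_Ioi ν)).aemeasurable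
        (Eventually.of_forall fun t => ENNReal.add_lt_top.mpr
          ⟨measure_lt_top _ _, measure_lt_top _ _⟩)]
      apply integral_congr_ae
      apply Eventually.of_forall
      intro t
      exact (ENNReal.toReal_add (measure_ne_top _ _) (measure_ne_top _ _)).symm
    rw [h1, sym_id ν, hνuniv, ENNReal.toReal_mul, hζrdef]
  -- compute ∫ f over Z
  have hfsplit : ∀ u : ℝ, f u = (γ - ((ν (Set.Ici u)).toReal + (ν (Set.Ioi u)).toReal) / 2)
      + (max ((ν (Set.Ici u)).toReal - γ) 0) / 2 := by
    intro u
    rw [hfdef]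
    simp only
    rcases le_total ((ν (Set.Ici u)).toReal) γ with h | h
    · rw [max_eq_left (by linarith), max_eq_right (by linarith)]
      ring
    · rw [max_eq_right (by linarith), max_eq_left (by linarith)]
      ring
  set J : ℝ := ∫ u, max ((ν (Set.Ici u)).toReal - γ) 0 ∂ν with hJdef
  have hJ0 : 0 ≤ J := by
    rw [hJdef]
    apply integral_nonneg
    intro u
    exact le_max_right _ _
  have hfval : ∫ u in Z, f u ∂μ₀ = γ * ζr - (ζr * ζr) / 2 + J / 2 := by
    have hEE : ∫ u in Z, f u ∂μ₀ = ∫ u, f u ∂ν := by rw [hνdef]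
    rw [hEE]
    have h2 : ∫ u, f u ∂ν
        = ∫ u, ((γ - ((ν (Set.Ici u)).toReal + (ν (Set.Ioi u)).toReal) / 2)
          + (max ((ν (Set.Ici u)).toReal - γ) 0) / 2) ∂ν := by
      apply integral_congr_ae
      exact Eventually.of_forall hfsplit
    rw [h2]
    have haddν : Integrable (fun u => (ν (Set.Ici u)).toReal + (ν (Set.Ioi u)).toReal) ν :=
      hνIciint.add hνIoiint
    have hdivν : Integrable
        (fun u => ((ν (Set.Ici u)).toReal + (ν (Set.Ioi u)).toReal) / 2) ν :=
      haddν.div_const 2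
    have hint1 : Integrable
        (fun u => γ - ((ν (Set.Ici u)).toReal + (ν (Set.Ioi u)).toReal) / 2) ν :=
      (integrable_const γ).sub hdivν
    have hmaxdiv : Integrable (fun u => (max ((ν (Set.Ici u)).toReal - γ) 0) / 2) ν :=
      hmaxint.div_const 2
    rw [integral_add hint1 hmaxdiv, integral_sub (integrable_const γ) hdivν,
      integral_div, hsymν, integral_div, ← hJdef, integral_const, measureReal_def, hνuniv, smul_eq_mul,
      ← hζrdef]
    ring
  -- case analysis on whether some point of Z has large closed-ray ν measure
  have hfinal : γ ^ 2 / 2 ≤ ∫ u in Z, f u ∂μ₀ := by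
    rw [hfval]
    by_cases hcase : ∀ u ∈ Z, ν (Set.Ici u) ≤ ENNReal.ofReal γ
    · -- then ζ ≤ γ, so ζr = γ
      have hζleγ : ζ ≤ ENNReal.ofReal γ := by
        have hsub : Z ⊆ {t | μ' (Set.Ici t) ≤ ENNReal.ofReal γ} := by
          intro u hu
          rw [mem_setOf_eq]
          have : μ' (Set.Ici u) = ν (Set.Ici u) := by
            rw [hμ'def, hνdef, Measure.restrict_apply measurableSet_Ici,
              Measure.restrict_apply measurableSet_Ici, hIciZ u hu]
          rw [this]
          exact hcase u hu
        have h1 : μ' Z = ζ := by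
          rw [hμ'def, Measure.restrict_apply hZmeas, hζdef]
          congr 1
          rw [inter_eq_left]
          exact hZRc
        calc ζ = μ' Z := h1.symm
          _ ≤ μ' {t | μ' (Set.Ici t) ≤ ENNReal.ofReal γ} := measure_mono hsub
          _ ≤ ENNReal.ofReal γ := superuniform μ' _
      have hζrγ' : ζr ≤ γ := by
        rw [hζrdef]
        exact ENNReal.toReal_le_of_le_ofReal hγpos.le hζleγ
      exact final_algebra1 γ ζr J (le_antisymm hζrγ' hζrγ) hJ0
    · push_neg at hcase
      obtain ⟨b, hbZ, hbgt⟩ := hcase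
      -- no ν mass strictly below b
      have hνIiob : ν (Set.Iio b) = 0 := by
        rw [hνdef, Measure.restrict_apply measurableSet_Iio]
        have hempty : Set.Iio b ∩ Z = ∅ := by
          ext u
          simp only [mem_inter_iff, mem_Iio, mem_empty_iff_false, iff_false, not_and]
          intro hub huZ
          have h1 : ν (Set.Ici b) ≤ μ' (Set.Ioi u) := by
            have hsub2 : Set.Ici b ∩ Z ⊆ Set.Ioi u ∩ Rᶜ := by
              intro w hw
              exact ⟨lt_of_lt_of_le hub hw.1, hw.2.2⟩
            rw [hνdef, hμ'def, Measure.restrict_apply measurableSet_Ici,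
              Measure.restrict_apply measurableSet_Ioi]
            exact measure_mono hsub2
          have h2 : μ' (Set.Ioi u) < ENNReal.ofReal γ := huZ.1
          exact absurd (lt_of_le_of_lt h1 h2) (not_lt.mpr hbgt.le)
        rw [hempty, measure_empty]
      have hζIcib : ν (Set.Ici b) = ζ := by
        have hsplit : Set.Iio b ∪ Set.Ici b = Set.univ := Iio_union_Ici
        have h4 : ν (Set.Iio b ∪ Set.Ici b) = ν (Set.Iio b) + ν (Set.Ici b) :=
          measure_union (Iio_disjoint_Ici (le_refl b)) measurableSet_Ici
        rw [hsplit, hνuniv, hνIiob, zero_add] at h4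
        exact h4.symm
      -- the singleton atom at b
      have hIcib : Set.Ici b = {b} ∪ Set.Ioi b := by
        ext u
        simp only [mem_Ici, mem_union, mem_singleton_iff, mem_Ioi]
        constructor
        · intro h
          rcases eq_or_lt_of_le h with h' | h'
          · exact Or.inl h'.symm
          · exact Or.inr h'
        · rintro (h | h)
          · exact h.ge
          · exact h.le
      have hatom : ν (Set.Ici b) = ν {b} + ν (Set.Ioi b) := by
        rw [hIcib]
        exact measure_union (by
          simp only [disjoint_singleton_left, mem_Ioi]
          exact lt_irrefl b) measurableSet_Ioi
      have hνIoib : ν (Set.Ioi b) ≤ ENNReal.ofReal γ := by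
        have h1 : ν (Set.Ioi b) ≤ μ' (Set.Ioi b) := by
          rw [hνdef, hμ'def, Measure.restrict_apply measurableSet_Ioi,
            Measure.restrict_apply measurableSet_Ioi]
          exact measure_mono (inter_subset_inter_right _ hZRc)
        exact le_trans h1 (hbZ.1).le
      have hmb : ζr - γ ≤ (ν {b}).toReal := by
        have h1 : ζ = ν {b} + ν (Set.Ioi b) := by rw [← hζIcib, hatom]
        have h2 := congrArg ENNReal.toReal h1
        rw [ENNReal.toReal_add (measure_ne_top _ _) (measure_ne_top _ _)] at h2
        have h3 : (ν (Set.Ioi b)).toReal ≤ γ :=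
          ENNReal.toReal_le_of_le_ofReal hγpos.le hνIoib
        rw [hζrdef]
        linarith
      -- J is at least the contribution of the atom at b
      have hJb : (ν {b}).toReal * (ζr - γ) ≤ J := by
        have hmeasmax : Measurable fun u => max ((ν (Set.Ici u)).toReal - γ) 0 :=
          (((meas_Ici ν).ennreal_toReal).sub measurable_const).max measurable_const
        have h1 : ∫ u in {b}, max ((ν (Set.Ici u)).toReal - γ) 0 ∂ν ≤ J := by
          rw [hJdef]
          apply setIntegral_le_integral hmaxint
          apply Eventually.of_forall
          intro u
          exact le_max_right _ _
        have h2 : ∫ u in {b}, max ((ν (Set.Ici u)).toReal - γ) 0 ∂ν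
            = (ν {b}).toReal * max ((ν (Set.Ici b)).toReal - γ) 0 := by
          rw [Measure.restrict_singleton, integral_smul_measure, integral_dirac]
          simp [smul_eq_mul]
        have h3 : max ((ν (Set.Ici b)).toReal - γ) 0 = ζr - γ := by
          rw [hζIcib, ← hζrdef]
          exact max_eq_left (by linarith)
        calc (ν {b}).toReal * (ζr - γ) = (ν {b}).toReal * max ((ν (Set.Ici b)).toReal - γ) 0 := by
              rw [h3]
          _ = ∫ u in {b}, max ((ν (Set.Ici u)).toReal - γ) 0 ∂ν := h2.symm
          _ ≤ J := h1
      exact final_algebra2 γ ζr J (sq_le_calc hζrγ hmb hJb)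
  -- put everything together
  have hεγ2 : ε ^ 2 / 2 ≤ γ ^ 2 / 2 := sq_div2_mono hε.le hεγ
  calc ε ^ 2 / 2 ≤ γ ^ 2 / 2 := hεγ2
    _ ≤ ∫ u in Z, f u ∂μ₀ := hfinal
    _ ≤ ∫ u in Z, g u ∂μ₀ := hstep2
    _ ≤ ∫ u, g u ∂μ₀ := hstep1
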